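/- Let σ be a real number and r : ℝ → ℝ differentiable, and suppose μ ≡ 0 (symmetric inflow). Let x, y, z : [0,∞) → ℝ be continuously differentiable and satisfy the water wheel system x' = σ(y − x), y' = r(τ)x − y − xz, z' = xy − z + r'(τ) on [0,∞), with initial conditions x(0) = 0 and y(0) = 0. Then x(τ) = 0 and y(τ) = 0 for all τ ≥ 0 (the wheel never spins), and z satisfies z'(τ) = r'(τ) − z(τ), so that z(τ) = e^{−τ} ( z(0) + ∫₀^τ e^{s} r'(s) ds ). -/

import Mathlib

open Real intervalIntegral

/-- With symmetric inflow (`μ ≡ 0`) and zero initial angular velocity and first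
mode (`x(0) = y(0) = 0`), the water wheel never spins: `x ≡ 0` and `y ≡ 0` on
`[0,∞)`, while `z` satisfies `z' = r' − z`, so that
`z(τ) = e^{−τ}(z(0) + ∫₀^τ e^s r'(s) ds)`. -/
theorem water_wheel_symmetric_no_spin
    (σ : ℝ) (r : ℝ → ℝ) (hr : Differentiable ℝ r)
    (x y z : ℝ → ℝ)
    (hx : ContDiff ℝ 1 x) (hy : ContDiff ℝ 1 y) (hz : ContDiff ℝ 1 z)
    (hxde : ∀ τ ≥ (0 : ℝ), deriv x τ = σ * (y τ - x τ))
    (hyde : ∀ τ ≥ (0 : ℝ), deriv y τ = r τ * x τ - y τ - x τ * z τ)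
    (hzde : ∀ τ ≥ (0 : ℝ), deriv z τ = x τ * y τ - z τ + deriv r τ)
    (hx0 : x 0 = 0) (hy0 : y 0 = 0) :
    ∀ τ ≥ (0 : ℝ),
      x τ = 0 ∧ y τ = 0 ∧
        deriv z τ = deriv r τ - z τ ∧
        z τ = Real.exp (-τ) * (z 0 + ∫ s in (0 : ℝ)..τ, Real.exp s * deriv r s) := by
  have hdx : Differentiable ℝ x := hx.differentiable one_ne_zero
  have hdy : Differentiable ℝ y := hy.differentiable one_ne_zero
  have hdz : Differentiable ℝ z := hz.differentiable one_ne_zero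
  -- Step 1: x ≡ 0 and y ≡ 0 on [0, ∞), by Grönwall's inequality.
  have key : ∀ τ ≥ (0 : ℝ), x τ = 0 ∧ y τ = 0 := by
    intro τ hτ
    obtain ⟨K, hK⟩ : ∃ K : ℝ,
        ∀ t ∈ Set.Icc (0:ℝ) τ, max (2 * |σ|) (|r t| + 1 + |z t|) ≤ K := by
      obtain ⟨K, hK⟩ := (isCompact_Icc (a := (0:ℝ)) (b := τ)).exists_bound_of_continuousOn
        (((continuous_const.max (((hr.continuous.abs.add continuous_const).add
          ((hz.continuous).abs)))).continuousOn))
      exact ⟨K, fun t ht => (le_abs_self _).trans (hK t ht)⟩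
    set f : ℝ → ℝ × ℝ := fun t => (x t, y t) with hf
    have hderiv : ∀ t ∈ Set.Ico (0:ℝ) τ,
        HasDerivWithinAt f (deriv x t, deriv y t) (Set.Ici t) t := by
      intro t ht
      exact (((hdx t).hasDerivAt.prodMk (hdy t).hasDerivAt)).hasDerivWithinAt
    have hbound : ∀ t ∈ Set.Ico (0:ℝ) τ,
        ‖(deriv x t, deriv y t)‖ ≤ K * ‖f t‖ + 0 := by
      intro t ht
      have ht' : t ∈ Set.Icc (0:ℝ) τ := Set.Ico_subset_Icc_self ht
      have hKt := hK t ht'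
      have hK1 : 2 * |σ| ≤ K := le_trans (le_max_left _ _) hKt
      have hK2 : |r t| + 1 + |z t| ≤ K := le_trans (le_max_right _ _) hKt
      rw [add_zero, Prod.norm_def]
      have hfx : |x t| ≤ ‖f t‖ := le_max_left _ _
      have hfy : |y t| ≤ ‖f t‖ := le_max_right _ _
      have hfnn : 0 ≤ ‖f t‖ := norm_nonneg _
      rw [max_le_iff]
      constructor
      · rw [hxde t ht.1, Real.norm_eq_abs, abs_mul]
        calc |σ| * |y t - x t| ≤ |σ| * (|y t| + |x t|) :=
              mul_le_mul_of_nonneg_left (abs_sub _ _) (abs_nonneg _)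
          _ ≤ |σ| * (‖f t‖ + ‖f t‖) :=
              mul_le_mul_of_nonneg_left (add_le_add hfy hfx) (abs_nonneg _)
          _ = 2 * |σ| * ‖f t‖ := by ring
          _ ≤ K * ‖f t‖ := mul_le_mul_of_nonneg_right hK1 hfnn
      · rw [hyde t ht.1, Real.norm_eq_abs]
        calc |r t * x t - y t - x t * z t|
            ≤ |r t * x t| + |y t| + |x t * z t| :=
              (abs_sub _ _).trans (add_le_add_left ((abs_sub _ _)) _)
          _ = |r t| * |x t| + |y t| + |x t| * |z t| := by rw [abs_mul, abs_mul]
          _ ≤ |r t| * ‖f t‖ + ‖f t‖ + ‖f t‖ * |z t| := by gcongr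
          _ = (|r t| + 1 + |z t|) * ‖f t‖ := by ring
          _ ≤ K * ‖f t‖ := mul_le_mul_of_nonneg_right hK2 hfnn
    have hcf : ContinuousOn f (Set.Icc 0 τ) :=
      ((hdx.continuous.prodMk hdy.continuous)).continuousOn
    have ha : ‖f 0‖ ≤ 0 := by simp [hf, hx0, hy0, Prod.norm_def]
    have hgb := norm_le_gronwallBound_of_norm_deriv_right_le hcf hderiv ha hbound τ
      ⟨hτ, le_rfl⟩
    rw [gronwallBound_ε0_δ0] at hgb
    have h0 : ‖f τ‖ = 0 := le_antisymm hgb (norm_nonneg _)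
    rw [norm_eq_zero] at h0
    exact ⟨congrArg Prod.fst h0, congrArg Prod.snd h0⟩
  -- Step 2: the reduced equation for z.
  have hz' : ∀ t ≥ (0:ℝ), deriv z t = deriv r t - z t := by
    intro t ht
    rw [hzde t ht, (key t ht).1]
    ring
  intro τ hτ
  refine ⟨(key τ hτ).1, (key τ hτ).2, hz' τ hτ, ?_⟩
  -- Step 3: FTC for g t = exp t * z t.
  have hmem : ∀ t ∈ Set.uIcc (0:ℝ) τ, (0:ℝ) ≤ t := by
    intro t ht
    rw [Set.uIcc_of_le hτ] at ht
    exact ht.1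
  have hgd : ∀ t ∈ Set.uIcc (0:ℝ) τ,
      HasDerivAt (fun s => Real.exp s * z s) (Real.exp t * deriv r t) t := by
    intro t ht
    have h1 : HasDerivAt (fun s => Real.exp s * z s)
        (Real.exp t * z t + Real.exp t * deriv z t) t :=
      (Real.hasDerivAt_exp t).mul (hdz t).hasDerivAt
    have : Real.exp t * z t + Real.exp t * deriv z t = Real.exp t * deriv r t := by
      rw [hz' t (hmem t ht)]; ring
    rwa [this] at h1
  have hint : IntervalIntegrable (fun s => Real.exp s * deriv r s)
      MeasureTheory.volume 0 τ := by
    apply ContinuousOn.intervalIntegrable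
    have hcont : ContinuousOn (fun s => Real.exp s * (deriv z s + z s - x s * y s))
        (Set.uIcc (0:ℝ) τ) :=
      (Real.continuous_exp.mul (((hz.continuous_deriv le_rfl).add hz.continuous).sub
        (hdx.continuous.mul hdy.continuous))).continuousOn
    apply hcont.congr
    intro t ht
    have ht0 := hmem t ht
    simp only
    rw [hz' t ht0, (key t ht0).1]
    ring
  have hftc := intervalIntegral.integral_eq_sub_of_hasDerivAt hgd hint
  rw [hftc]
  rw [Real.exp_zero, one_mul, Real.exp_neg]
  field_simp
  ring
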